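/- Strong duality for the bundle entropy subproblem: for any G ∈ ℝ^{k×n} and h ∈ ℝ^k, min_{y ∈ [0,1]^n} ( max_{1 ≤ i ≤ k} (Gy + h)_i − H(y) ) = max_{λ ≥ 0, 1ᵀλ = 1} ( (G1 + h)ᵀλ − ∑_{j=1}^n log(1 + exp((Gᵀλ)_j)) ), and both the minimum and the maximum are attained. -/

import Mathlib

/-- The negative binary entropy `-H(y) = ∑ᵢ (yᵢ log yᵢ + (1 - yᵢ) log (1 - yᵢ))`.
Note that `Real.log 0 = 0` in Mathlib, so this automatically uses the convention
`0 · log 0 = 0`. -/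
noncomputable def negEnt {n : ℕ} (y : Fin n → ℝ) : ℝ :=
  ∑ i, (y i * Real.log (y i) + (1 - y i) * Real.log (1 - y i))

open Real Finset Filter

lemma key_eq (a : ℝ) :
    a * (1/(1+Real.exp a)) + ((1/(1+Real.exp a)) * Real.log (1/(1+Real.exp a))
      + (1 - 1/(1+Real.exp a)) * Real.log (1 - 1/(1+Real.exp a)))
    = a - Real.log (1+Real.exp a) := by
  have hE : (0:ℝ) < 1 + Real.exp a := by positivity
  have h1 : 1 - 1/(1+Real.exp a) = Real.exp a / (1+Real.exp a) := by field_simp; ring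
  have h2 : Real.log (1/(1+Real.exp a)) = - Real.log (1+Real.exp a) := by
    rw [one_div, Real.log_inv]
  have h3 : Real.log (Real.exp a / (1+Real.exp a)) = a - Real.log (1+Real.exp a) := by
    rw [Real.log_div (Real.exp_ne_zero a) hE.ne', Real.log_exp]
  rw [h1, h2, h3]
  field_simp
  ring

lemma key_ineq (a y : ℝ) (h0 : 0 ≤ y) (h1 : y ≤ 1) :
    a - Real.log (1+Real.exp a) ≤ a*y + (y * Real.log y + (1-y) * Real.log (1-y)) := by
  have hE : (0:ℝ) < 1 + Real.exp a := by positivity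
  rcases eq_or_lt_of_le h0 with h0' | h0'
  · simp [← h0']
    have : Real.exp a ≤ 1 + Real.exp a := by linarith
    calc a = Real.log (Real.exp a) := (Real.log_exp a).symm
    _ ≤ Real.log (1 + Real.exp a) := Real.log_le_log (Real.exp_pos a) this
  rcases eq_or_lt_of_le h1 with h1' | h1'
  · subst h1'
    simp
    have : (1:ℝ) ≤ 1 + Real.exp a := by linarith [Real.exp_pos a]
    have := Real.log_nonneg this
    linarith
  -- interior case
  set p : ℝ := 1/(1+Real.exp a) with hp
  have hp0 : 0 < p := by positivity
  have hq0 : 0 < 1 - p := by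
    rw [hp]
    have : 1/(1+Real.exp a) < 1 := by
      rw [div_lt_one hE]; linarith [Real.exp_pos a]
    linarith
  have hlp : Real.log p = - Real.log (1+Real.exp a) := by rw [hp, one_div, Real.log_inv]
  have hlq : Real.log (1-p) = a - Real.log (1+Real.exp a) := by
    have : 1 - p = Real.exp a / (1+Real.exp a) := by rw [hp]; field_simp; ring
    rw [this, Real.log_div (Real.exp_ne_zero a) hE.ne', Real.log_exp]
  have k1 : Real.log (p/y) ≤ p/y - 1 := Real.log_le_sub_one_of_pos (div_pos hp0 h0')
  have k2 : Real.log ((1-p)/(1-y)) ≤ (1-p)/(1-y) - 1 :=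
    Real.log_le_sub_one_of_pos (div_pos hq0 (by linarith))
  have e1 : Real.log (p/y) = Real.log p - Real.log y := Real.log_div hp0.ne' h0'.ne'
  have e2 : Real.log ((1-p)/(1-y)) = Real.log (1-p) - Real.log (1-y) :=
    Real.log_div hq0.ne' (by linarith)
  have m1 : y * Real.log (p/y) ≤ p - y := by
    have := mul_le_mul_of_nonneg_left k1 h0'.le
    have hyy : y * (p/y - 1) = p - y := by field_simp
    linarith [hyy ▸ this]
  have m2 : (1-y) * Real.log ((1-p)/(1-y)) ≤ (1-p) - (1-y) := by
    have h1y : (0:ℝ) < 1 - y := by linarith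
    have := mul_le_mul_of_nonneg_left k2 h1y.le
    have hyy : (1-y) * ((1-p)/(1-y) - 1) = (1-p) - (1-y) := by field_simp
    linarith [hyy ▸ this]
  rw [e1] at m1; rw [e2] at m2
  rw [hlp] at m1; rw [hlq] at m2
  nlinarith [m1, m2]

lemma hasDerivAt_L (a b : ℝ) :
    HasDerivAt (fun t : ℝ => Real.log (1 + Real.exp (a + t*b)))
      (b * Real.exp a / (1 + Real.exp a)) 0 := by
  have h1 : HasDerivAt (fun t : ℝ => a + t*b) b 0 := by
    simpa using (hasDerivAt_id (0:ℝ)).mul_const b |>.const_add a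
  have h2 : HasDerivAt (fun t : ℝ => Real.exp (a + t*b)) (Real.exp (a + 0*b) * b) 0 :=
    by have h := HasDerivAt.comp (0:ℝ) (Real.hasDerivAt_exp (a + 0*b)) h1; exact h
  have h3 : HasDerivAt (fun t : ℝ => 1 + Real.exp (a + t*b)) (Real.exp (a + 0*b) * b) 0 :=
    h2.const_add 1
  have hne : (1 + Real.exp (a + 0*b)) ≠ 0 := by positivity
  have h4 := h3.log hne
  simpa [mul_comm, mul_div_assoc] using h4

lemma deriv_nonpos_of_max {φ : ℝ → ℝ} {m : ℝ} (hφ : HasDerivAt φ m 0)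
    (hmax : ∀ t ∈ Set.Icc (0:ℝ) 1, φ t ≤ φ 0) : m ≤ 0 := by
  by_contra hm
  push_neg at hm
  have hs := hasDerivAt_iff_tendsto_slope.mp hφ
  have hs' : Filter.Tendsto (slope φ 0) (nhdsWithin 0 (Set.Ioi 0)) (nhds m) :=
    hs.mono_left (nhdsWithin_mono 0 (fun x hx => ne_of_gt hx))
  have hev : ∀ᶠ t in nhdsWithin 0 (Set.Ioi 0), 0 < slope φ 0 t :=
    hs'.eventually (eventually_gt_nhds hm)
  have hev2 : ∀ᶠ t in nhdsWithin (0:ℝ) (Set.Ioi 0), t ∈ Set.Ioo (0:ℝ) 1 :=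
    Ioo_mem_nhdsGT_of_mem (by norm_num : (0:ℝ) ∈ Set.Ico (0:ℝ) 1)
  obtain ⟨t, ht1, ht2⟩ := (hev.and hev2).exists
  have : slope φ 0 t = (φ t - φ 0) / t := by simp [slope_def_field]
  rw [this] at ht1
  have h5 : 0 < φ t - φ 0 := by
    by_contra h6
    push_neg at h6
    have := div_nonpos_of_nonpos_of_nonneg h6 ht2.1.le
    linarith
  have := hmax t ⟨ht2.1.le, ht2.2.le⟩
  linarith


section helpers
variable {k n : ℕ}

lemma mulVecT (G : Matrix (Fin k) (Fin n) ℝ) (lam : Fin k → ℝ) (j : Fin n) :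
    G.transpose.mulVec lam j = ∑ i, G i j * lam i := by
  simp [Matrix.mulVec, dotProduct, Matrix.transpose_apply]

lemma mulVecE (G : Matrix (Fin k) (Fin n) ℝ) (y : Fin n → ℝ) (i : Fin k) :
    G.mulVec y i = ∑ j, G i j * y j := by
  simp [Matrix.mulVec, dotProduct]

lemma swap_sum (G : Matrix (Fin k) (Fin n) ℝ) (lam : Fin k → ℝ) (y : Fin n → ℝ) :
    ∑ i, lam i * (G.mulVec y i) = ∑ j, (∑ i, G i j * lam i) * y j := by
  simp only [mulVecE, Finset.mul_sum, Finset.sum_mul]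
  rw [Finset.sum_comm]
  apply Finset.sum_congr rfl; intro j _
  apply Finset.sum_congr rfl; intro i _
  ring

lemma csum (G : Matrix (Fin k) (Fin n) ℝ) (h : Fin k → ℝ) (lam : Fin k → ℝ) :
    ∑ i, (G.mulVec (fun _ => 1) i + h i) * lam i
      = (∑ j, ∑ i, G i j * lam i) + ∑ i, h i * lam i := by
  have : ∀ i, (G.mulVec (fun _ => (1:ℝ)) i + h i) * lam i
      = (∑ j, G i j * lam i) + h i * lam i := by
    intro i
    rw [mulVecE]
    simp [Finset.sum_mul, add_mul]
  rw [Finset.sum_congr rfl (fun i _ => this i), Finset.sum_add_distrib, Finset.sum_comm]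

end helpers


/-- Strong duality for the bundle entropy subproblem:
`min_{y ∈ [0,1]ⁿ} (maxᵢ (Gy + h)ᵢ - H(y)) = max_{λ ≥ 0, 1ᵀλ = 1} ((G1 + h)ᵀλ - ∑ⱼ log (1 +
exp ((Gᵀλ)ⱼ)))`, and both the minimum and the maximum are attained.  (Recall
`-H(y) = negEnt y`.) -/
theorem bundle_entropy_strong_duality (k n : ℕ) (hk : 0 < k)
    (G : Matrix (Fin k) (Fin n) ℝ) (h : Fin k → ℝ) :
    ∃ ystar ∈ Set.Icc (0 : Fin n → ℝ) 1, ∃ lamstar : Fin k → ℝ,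
      (∀ i, 0 ≤ lamstar i) ∧ (∑ i, lamstar i = 1) ∧
      (∀ y ∈ Set.Icc (0 : Fin n → ℝ) 1,
        (Finset.univ.sup' ⟨⟨0, hk⟩, Finset.mem_univ _⟩ fun i => G.mulVec ystar i + h i)
            + negEnt ystar ≤
          (Finset.univ.sup' ⟨⟨0, hk⟩, Finset.mem_univ _⟩ fun i => G.mulVec y i + h i)
            + negEnt y) ∧
      (∀ lam : Fin k → ℝ, (∀ i, 0 ≤ lam i) → (∑ i, lam i = 1) →
        (∑ i, (G.mulVec (fun _ => 1) i + h i) * lam i)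
            - ∑ j, Real.log (1 + Real.exp (G.transpose.mulVec lam j)) ≤
          (∑ i, (G.mulVec (fun _ => 1) i + h i) * lamstar i)
            - ∑ j, Real.log (1 + Real.exp (G.transpose.mulVec lamstar j))) ∧
      ((Finset.univ.sup' ⟨⟨0, hk⟩, Finset.mem_univ _⟩ fun i => G.mulVec ystar i + h i)
          + negEnt ystar =
        (∑ i, (G.mulVec (fun _ => 1) i + h i) * lamstar i)
          - ∑ j, Real.log (1 + Real.exp (G.transpose.mulVec lamstar j))) := by
  classical
  haveI : Nonempty (Fin k) := ⟨⟨0, hk⟩⟩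
  set ne1 : Finset.Nonempty (Finset.univ : Finset (Fin k)) := ⟨⟨0, hk⟩, Finset.mem_univ _⟩
  -- dual objective
  set D : (Fin k → ℝ) → ℝ := fun lam =>
    (∑ i, (G.mulVec (fun _ => 1) i + h i) * lam i)
      - ∑ j, Real.log (1 + Real.exp (G.transpose.mulVec lam j)) with hD
  -- dual maximizer
  have hcont : ContinuousOn D (stdSimplex ℝ (Fin k)) := by
    apply Continuous.continuousOn
    apply Continuous.sub
    · exact continuous_finset_sum _ fun i _ => (continuous_const.mul (continuous_apply i))
    · apply continuous_finset_sum _ fun j _ => ?_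
      have h1 : Continuous fun lam : Fin k → ℝ => G.transpose.mulVec lam j := by
        simp only [mulVecT]
        exact continuous_finset_sum _ fun i _ => (continuous_const.mul (continuous_apply i))
      have h2 : Continuous fun lam : Fin k → ℝ =>
          1 + Real.exp (G.transpose.mulVec lam j) :=
        continuous_const.add (Real.continuous_exp.comp h1)
      exact h2.log fun lam => by positivity
  have hne : (stdSimplex ℝ (Fin k)).Nonempty := by
    refine ⟨fun _ => (k:ℝ)⁻¹, fun i => by positivity, ?_⟩
    simp
    field_simp
  obtain ⟨lamstar, hmem, hopt⟩ := (isCompact_stdSimplex ℝ (Fin k)).exists_isMaxOn hne hcont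
  have hl0 : ∀ i, 0 ≤ lamstar i := hmem.1
  have hl1 : ∑ i, lamstar i = 1 := hmem.2
  set a : Fin n → ℝ := fun j => ∑ i, G i j * lamstar i with ha
  set ystar : Fin n → ℝ := fun j => 1/(1 + Real.exp (a j)) with hy
  have hymem : ystar ∈ Set.Icc (0 : Fin n → ℝ) 1 := by
    constructor <;> intro j
    · have : (0:ℝ) < 1 + Real.exp (a j) := by positivity
      positivity
    · show (1:ℝ)/(1 + Real.exp (a j)) ≤ 1
      rw [div_le_one (by positivity)]
      linarith [Real.exp_pos (a j)]

  have hσ : ∀ j, Real.exp (a j)/(1 + Real.exp (a j)) = 1 - ystar j := by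
    intro j
    have : (0:ℝ) < 1 + Real.exp (a j) := by positivity
    rw [hy]; field_simp; ring
  -- first-order condition at the dual maximizer
  have first_order : ∀ i0 : Fin k,
      G.mulVec ystar i0 + h i0 ≤ ∑ i, lamstar i * (G.mulVec ystar i + h i) := by
    intro i0
    set d : Fin k → ℝ := fun i => (if i = i0 then (1:ℝ) else 0) - lamstar i with hd
    set b : Fin n → ℝ := fun j => G i0 j - a j with hb
    set ψ : ℝ → ℝ := fun t =>
      (∑ i, (G.mulVec (fun _ => 1) i + h i) * (lamstar i + t * d i))
        - ∑ j, Real.log (1 + Real.exp (a j + t * b j)) with hψ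
    have hAd : ∀ j, ∑ i, G i j * d i = b j := by
      intro j
      simp only [hd, mul_sub, Finset.sum_sub_distrib, mul_ite, mul_one, mul_zero,
        Finset.sum_ite_eq', Finset.mem_univ, if_true, hb, ha]
    have hA : ∀ (t : ℝ) (j : Fin n),
        G.transpose.mulVec (fun i => lamstar i + t * d i) j = a j + t * b j := by
      intro t j
      rw [mulVecT]
      have e : ∀ i, G i j * (lamstar i + t * d i)
          = G i j * lamstar i + t * (G i j * d i) := fun i => by ring
      rw [Finset.sum_congr rfl fun i _ => e i, Finset.sum_add_distrib, ← Finset.mul_sum,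
        hAd j, ha]
    have hψeq : ∀ t : ℝ, ψ t = D (fun i => lamstar i + t * d i) := by
      intro t; rw [hψ, hD]; simp only [hA]
    have hmemt : ∀ t ∈ Set.Icc (0:ℝ) 1,
        (fun i => lamstar i + t * d i) ∈ stdSimplex ℝ (Fin k) := by
      intro t ht
      constructor
      · intro i
        have h1 : lamstar i + t * d i
            = (1 - t) * lamstar i + t * (if i = i0 then 1 else 0) := by rw [hd]; ring
        show (0:ℝ) ≤ lamstar i + t * d i
        rw [h1]
        have h2 : (0:ℝ) ≤ (if i = i0 then (1:ℝ) else 0) := by split <;> norm_num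
        have h3 : (0:ℝ) ≤ 1 - t := by linarith [ht.2]
        exact add_nonneg (mul_nonneg h3 (hl0 i)) (mul_nonneg ht.1 h2)
      · have hds : ∑ i, d i = 0 := by
          simp only [hd, Finset.sum_sub_distrib, Finset.sum_ite_eq', Finset.mem_univ,
            if_true, hl1]
          norm_num
        rw [Finset.sum_add_distrib, ← Finset.mul_sum, hds, hl1]; ring
    have hψ0 : ψ 0 = D lamstar := by
      rw [hψeq 0]
      congr 1
      funext i
      ring
    have hψmax : ∀ t ∈ Set.Icc (0:ℝ) 1, ψ t ≤ ψ 0 := by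
      intro t ht
      rw [hψeq t, hψ0]
      exact hopt (hmemt t ht)
    set m : ℝ := (∑ i, (G.mulVec (fun _ => 1) i + h i) * d i)
        - ∑ j, b j * Real.exp (a j) / (1 + Real.exp (a j)) with hm
    have hder : HasDerivAt ψ m 0 := by
      rw [hψ, hm]
      apply HasDerivAt.sub
      · apply HasDerivAt.fun_sum
        intro i _
        have h1 : HasDerivAt (fun t : ℝ => lamstar i + t * d i) (d i) 0 := by
          simpa using ((hasDerivAt_id (0:ℝ)).mul_const (d i)).const_add (lamstar i)
        simpa [mul_comm] using h1.const_mul (G.mulVec (fun _ => 1) i + h i)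
      · apply HasDerivAt.fun_sum
        intro j _
        exact hasDerivAt_L (a j) (b j)
    have hm0 : m ≤ 0 := deriv_nonpos_of_max hder hψmax
    have key : m = (G.mulVec ystar i0 + h i0)
        - ∑ i, lamstar i * (G.mulVec ystar i + h i) := by
      have hC1 : ∑ i, (G.mulVec (fun _ => 1) i + h i) * d i
          = (G.mulVec (fun _ => 1) i0 + h i0)
            - ∑ i, (G.mulVec (fun _ => 1) i + h i) * lamstar i := by
        simp only [hd, mul_sub, Finset.sum_sub_distrib, mul_ite, mul_one, mul_zero,
          Finset.sum_ite_eq', Finset.mem_univ, if_true]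
      have e1 : ∑ j, b j * Real.exp (a j) / (1 + Real.exp (a j))
          = ∑ j, (G i0 j - a j) * (1 - ystar j) := by
        apply Finset.sum_congr rfl
        intro j _
        rw [mul_div_assoc, hσ j, hb]
      have e2 : G.mulVec (fun _ => 1) i0 = ∑ j, G i0 j := by rw [mulVecE]; simp
      have e3 : ∑ i, (G.mulVec (fun _ => 1) i + h i) * lamstar i
          = (∑ j, a j) + ∑ i, h i * lamstar i := by rw [csum, ha]
      have e4 : ∑ i, lamstar i * (G.mulVec ystar i + h i)
          = (∑ j, a j * ystar j) + ∑ i, h i * lamstar i := by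
        have : ∀ i, lamstar i * (G.mulVec ystar i + h i)
            = lamstar i * G.mulVec ystar i + h i * lamstar i := fun i => by ring
        rw [Finset.sum_congr rfl fun i _ => this i, Finset.sum_add_distrib,
          swap_sum, ha]
      have e5 : G.mulVec ystar i0 = ∑ j, G i0 j * ystar j := mulVecE G ystar i0
      rw [hm, hC1, e1, e2, e3, e4, e5]
      have e6 : ∑ j, (G i0 j - a j) * (1 - ystar j)
          = (∑ j, G i0 j) - (∑ j, G i0 j * ystar j) - (∑ j, a j) + ∑ j, a j * ystar j := by
        simp only [sub_mul, mul_sub, mul_one, Finset.sum_sub_distrib, Finset.sum_add_distrib]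
        ring
      rw [e6]
      ring
    linarith [hm0, key ▸ hm0]
  -- convex combination is below the max
  have conv_le : ∀ (lam : Fin k → ℝ), (∀ i, 0 ≤ lam i) → (∑ i, lam i = 1) →
      ∀ v : Fin k → ℝ, ∑ i, lam i * v i ≤ Finset.univ.sup' ne1 v := by
    intro lam hp hs v
    calc ∑ i, lam i * v i ≤ ∑ i, lam i * (Finset.univ.sup' ne1 v) :=
          Finset.sum_le_sum fun i _ =>
            mul_le_mul_of_nonneg_left (Finset.le_sup' v (Finset.mem_univ i)) (hp i)
      _ = Finset.univ.sup' ne1 v := by rw [← Finset.sum_mul, hs, one_mul]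
  have sup_eq : (Finset.univ.sup' ne1 fun i => G.mulVec ystar i + h i)
      = ∑ i, lamstar i * (G.mulVec ystar i + h i) :=
    le_antisymm (Finset.sup'_le _ _ fun i _ => first_order i)
      (conv_le lamstar hl0 hl1 _)
  -- rewriting the dual objective
  have hDform : ∀ lam : Fin k → ℝ, D lam
      = (∑ j, ((∑ i, G i j * lam i)
          - Real.log (1 + Real.exp (∑ i, G i j * lam i)))) + ∑ i, h i * lam i := by
    intro lam
    rw [hD]
    simp only [mulVecT]
    rw [csum, Finset.sum_sub_distrib]
    ring
  have hLform : ∀ (lam : Fin k → ℝ) (y : Fin n → ℝ),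
      ∑ i, lam i * (G.mulVec y i + h i) + negEnt y
      = (∑ j, ((∑ i, G i j * lam i) * y j
          + (y j * Real.log (y j) + (1 - y j) * Real.log (1 - y j)))) + ∑ i, h i * lam i := by
    intro lam y
    have e : ∀ i, lam i * (G.mulVec y i + h i)
        = lam i * G.mulVec y i + h i * lam i := fun i => by ring
    rw [Finset.sum_congr rfl fun i _ => e i, Finset.sum_add_distrib, swap_sum, negEnt,
      Finset.sum_add_distrib]
    simp only [Finset.sum_add_distrib]
    ring
  -- weak duality
  have weak : ∀ (lam : Fin k → ℝ), ∀ y ∈ Set.Icc (0 : Fin n → ℝ) 1,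
      D lam ≤ ∑ i, lam i * (G.mulVec y i + h i) + negEnt y := by
    intro lam y hy'
    rw [hDform lam, hLform lam y]
    apply add_le_add_left
    apply Finset.sum_le_sum
    intro j _
    exact key_ineq (∑ i, G i j * lam i) (y j) (hy'.1 j) (hy'.2 j)
  -- equality at the saddle point
  have eqstar : ∑ i, lamstar i * (G.mulVec ystar i + h i) + negEnt ystar = D lamstar := by
    rw [hDform lamstar, hLform lamstar ystar]
    congr 1
    apply Finset.sum_congr rfl
    intro j _
    have hyj : ystar j = 1/(1 + Real.exp (a j)) := by rw [hy]
    rw [hyj]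
    exact key_eq (∑ i, G i j * lamstar i)
  refine ⟨ystar, hymem, lamstar, hl0, hl1, ?_, ?_, ?_⟩
  · intro y hy'
    calc (Finset.univ.sup' ne1 fun i => G.mulVec ystar i + h i) + negEnt ystar
        = ∑ i, lamstar i * (G.mulVec ystar i + h i) + negEnt ystar := by rw [sup_eq]
      _ = D lamstar := eqstar
      _ ≤ ∑ i, lamstar i * (G.mulVec y i + h i) + negEnt y := weak lamstar y hy'
      _ ≤ (Finset.univ.sup' ne1 fun i => G.mulVec y i + h i) + negEnt y :=
          add_le_add_left (conv_le lamstar hl0 hl1 _) _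
  · intro lam hp hs
    show D lam ≤ D lamstar
    calc D lam ≤ ∑ i, lam i * (G.mulVec ystar i + h i) + negEnt ystar :=
          weak lam ystar hymem
      _ ≤ (Finset.univ.sup' ne1 fun i => G.mulVec ystar i + h i) + negEnt ystar :=
          add_le_add_left (conv_le lam hp hs _) _
      _ = D lamstar := by rw [sup_eq]; exact eqstar
  · show (Finset.univ.sup' ne1 fun i => G.mulVec ystar i + h i) + negEnt ystar = D lamstar
    rw [sup_eq]; exact eqstar
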